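/- For every n ≥ 2 and every k ≥ 0, the number of π ∈ D_n of type '1' with exactly k D-descents equals the number of π ∈ D_n of type '0,≥2' with exactly k D-descents; equivalently, D_n^1(t) = D_n^{0,≥2}(t) as polynomials. -/

import Mathlib

/-- A signed permutation of `{1,…,n}`, encoded as an (unsigned) permutation of
`Fin n` together with a choice of sign for each position.  The associated
word is `π_1 π_2 ⋯ π_n` where `π_j = ± σ(j)`. -/
abbrev SignedPerm (n : ℕ) := Equiv.Perm (Fin n) × (Fin n → Bool)

namespace SignedPerm

/-- The letter `π_j` of the word of `p`, for `1 ≤ j ≤ n` (and `0` otherwise). -/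
def word {n : ℕ} (p : SignedPerm n) (j : ℕ) : ℤ :=
  if h : 1 ≤ j ∧ j ≤ n then
    (if p.2 ⟨j - 1, by omega⟩ then -1 else 1) * ((p.1 ⟨j - 1, by omega⟩ : ℕ) + 1)
  else 0

/-- The letter `π_j`, with the type `D` convention `π_0 = -π_2`. -/
def entry {n : ℕ} (p : SignedPerm n) (j : ℕ) : ℤ :=
  if j = 0 then -(p.word 2) else p.word j

/-- The set of `D`-descents of `p`: those `i ∈ {0,…,n-1}` with `π_i > π_{i+1}`. -/
def ddes {n : ℕ} (p : SignedPerm n) : Finset ℕ :=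
  (Finset.range n).filter fun i => p.entry (i + 1) < p.entry i

/-- The number of `D`-descents of `p`. -/
def d {n : ℕ} (p : SignedPerm n) : ℕ := p.ddes.card

/-- Membership in the type `D` Coxeter group `D_n ⊆ B_n`:
the number of negative letters is even. -/
def inD {n : ℕ} (p : SignedPerm n) : Prop :=
  Even (Finset.univ.filter (fun i => p.2 i = true)).card

/-- Type '1': descent at position `1` but not at `0`. -/
def type1 {n : ℕ} (p : SignedPerm n) : Prop := 1 ∈ p.ddes ∧ 0 ∉ p.ddes

/-- Type '0,1': descents at both positions `0` and `1`. -/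
def type01 {n : ℕ} (p : SignedPerm n) : Prop := 0 ∈ p.ddes ∧ 1 ∈ p.ddes

/-- Type '≥2': no descent at positions `0` and `1`. -/
def typeGe2 {n : ℕ} (p : SignedPerm n) : Prop := 0 ∉ p.ddes ∧ 1 ∉ p.ddes

/-- Type '0,≥2': descent at position `0` but not at `1`. -/
def type0Ge2 {n : ℕ} (p : SignedPerm n) : Prop := 0 ∈ p.ddes ∧ 1 ∉ p.ddes

instance {n : ℕ} (p : SignedPerm n) : Decidable p.inD := by
  unfold SignedPerm.inD; infer_instance
instance {n : ℕ} (p : SignedPerm n) : Decidable p.type1 := by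
  unfold SignedPerm.type1; infer_instance
instance {n : ℕ} (p : SignedPerm n) : Decidable p.type01 := by
  unfold SignedPerm.type01; infer_instance
instance {n : ℕ} (p : SignedPerm n) : Decidable p.typeGe2 := by
  unfold SignedPerm.typeGe2; infer_instance
instance {n : ℕ} (p : SignedPerm n) : Decidable p.type0Ge2 := by
  unfold SignedPerm.type0Ge2; infer_instance

end SignedPerm

/-- The type `D` Eulerian number `D_{n,k}`: the number of elements of `D_n`
with exactly `k` `D`-descents (zero for `k < 0`). -/
def eulerD (n : ℕ) (k : ℤ) : ℕ :=
  (Finset.univ.filter fun p : SignedPerm n => p.inD ∧ (p.d : ℤ) = k).card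

/-- The sub-Eulerian number `D_{n,k}^1`. -/
def subEuler1 (n : ℕ) (k : ℤ) : ℕ :=
  (Finset.univ.filter fun p : SignedPerm n => p.inD ∧ p.type1 ∧ (p.d : ℤ) = k).card

/-- The sub-Eulerian number `D_{n,k}^{0,1}`. -/
def subEuler01 (n : ℕ) (k : ℤ) : ℕ :=
  (Finset.univ.filter fun p : SignedPerm n => p.inD ∧ p.type01 ∧ (p.d : ℤ) = k).card

/-- The sub-Eulerian number `D_{n,k}^{≥2}`. -/
def subEulerGe2 (n : ℕ) (k : ℤ) : ℕ :=
  (Finset.univ.filter fun p : SignedPerm n => p.inD ∧ p.typeGe2 ∧ (p.d : ℤ) = k).card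

/-- The sub-Eulerian number `D_{n,k}^{0,≥2}`. -/
def subEuler0Ge2 (n : ℕ) (k : ℤ) : ℕ :=
  (Finset.univ.filter fun p : SignedPerm n => p.inD ∧ p.type0Ge2 ∧ (p.d : ℤ) = k).card

/-- The type `D` Eulerian polynomial `D_n(t) = Σ_{π ∈ D_n} t^{d(π)}`
(with `D_0(t) = D_1(t) = 1`). -/
noncomputable def polyD (n : ℕ) : Polynomial ℚ :=
  ∑ p ∈ Finset.univ.filter (fun p : SignedPerm n => p.inD), Polynomial.X ^ p.d

/-- The sub-Eulerian polynomial `D_n^1(t)`. -/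
noncomputable def polyD1 (n : ℕ) : Polynomial ℚ :=
  ∑ p ∈ Finset.univ.filter (fun p : SignedPerm n => p.inD ∧ p.type1), Polynomial.X ^ p.d

/-- The sub-Eulerian polynomial `D_n^{0,1}(t)`. -/
noncomputable def polyD01 (n : ℕ) : Polynomial ℚ :=
  ∑ p ∈ Finset.univ.filter (fun p : SignedPerm n => p.inD ∧ p.type01), Polynomial.X ^ p.d

/-- The sub-Eulerian polynomial `D_n^{≥2}(t)`. -/
noncomputable def polyDGe2 (n : ℕ) : Polynomial ℚ :=
  ∑ p ∈ Finset.univ.filter (fun p : SignedPerm n => p.inD ∧ p.typeGe2), Polynomial.X ^ p.d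

/-- The sub-Eulerian polynomial `D_n^{0,≥2}(t)`. -/
noncomputable def polyD0Ge2 (n : ℕ) : Polynomial ℚ :=
  ∑ p ∈ Finset.univ.filter (fun p : SignedPerm n => p.inD ∧ p.type0Ge2), Polynomial.X ^ p.d


namespace SignedPerm

-- the involution
def F {n : ℕ} (p : SignedPerm n) : SignedPerm n :=
  (p.1, fun i => if (i : ℕ) = 0 ∨ (p.1 i : ℕ) = 0 then !p.2 i else p.2 i)

lemma F_F {n : ℕ} (p : SignedPerm n) : F (F p) = p := by
  obtain ⟨σ, s⟩ := p
  simp only [F]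
  refine Prod.ext rfl ?_
  funext i
  by_cases hc : (i : ℕ) = 0 ∨ (σ i : ℕ) = 0 <;> simp [hc]

lemma word_natAbs {n : ℕ} (p : SignedPerm n) {j : ℕ} (h1 : 1 ≤ j) (h2 : j ≤ n) :
    (word p j).natAbs = (p.1 ⟨j - 1, by omega⟩ : ℕ) + 1 := by
  rw [word, dif_pos ⟨h1, h2⟩]
  cases hb : p.2 ⟨j - 1, by omega⟩ <;> simp <;> omega

lemma word_F {n : ℕ} (p : SignedPerm n) {j : ℕ} (h1 : 1 ≤ j) (h2 : j ≤ n) :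
    word (F p) j = if j = 1 ∨ (p.1 ⟨j - 1, by omega⟩ : ℕ) = 0 then -word p j else word p j := by
  rw [word, word, dif_pos ⟨h1, h2⟩, dif_pos ⟨h1, h2⟩]
  simp only [F]
  have hj : j - 1 = 0 ↔ j = 1 := by omega
  simp only [hj]
  by_cases hc : j = 1 ∨ ((p.1 ⟨j - 1, by omega⟩ : Fin n) : ℕ) = 0
  · rw [if_pos hc, if_pos hc]
    cases hb : p.2 ⟨j - 1, by omega⟩ <;> simp [hb] <;> ring
  · rw [if_neg hc, if_neg hc]

lemma word_F_natAbs {n : ℕ} (p : SignedPerm n) {j : ℕ} (h1 : 1 ≤ j) (h2 : j ≤ n) :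
    (word (F p) j).natAbs = (word p j).natAbs := by
  rw [word_F p h1 h2]
  split_ifs <;> simp

lemma word_F_one {n : ℕ} (p : SignedPerm n) (hn : 1 ≤ n) :
    word (F p) 1 = -word p 1 := by
  rw [word_F p le_rfl hn, if_pos (Or.inl rfl)]

lemma natAbs_ne {n : ℕ} (p : SignedPerm n) {i j : ℕ} (h1 : 1 ≤ i) (h2 : i ≤ n)
    (h3 : 1 ≤ j) (h4 : j ≤ n) (hij : i ≠ j) :
    (word p i).natAbs ≠ (word p j).natAbs := by
  rw [word_natAbs p h1 h2, word_natAbs p h3 h4]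
  intro h
  have : p.1 ⟨i - 1, by omega⟩ = p.1 ⟨j - 1, by omega⟩ := Fin.ext (by omega)
  have := p.1.injective this
  rw [Fin.mk.injEq] at this
  omega

lemma mem_ddes {n : ℕ} (p : SignedPerm n) (i : ℕ) :
    i ∈ ddes p ↔ i < n ∧ entry p (i + 1) < entry p i := by
  simp [ddes, Finset.mem_filter, Finset.mem_range, and_comm]

lemma mem0 {n : ℕ} (p : SignedPerm n) (hn : 2 ≤ n) :
    0 ∈ ddes p ↔ word p 1 < -word p 2 := by
  rw [mem_ddes]
  simp [entry]
  omega

lemma mem1 {n : ℕ} (p : SignedPerm n) (hn : 2 ≤ n) :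
    1 ∈ ddes p ↔ word p 2 < word p 1 := by
  rw [mem_ddes]
  simp [entry]
  omega

lemma word_natAbs_pos {n : ℕ} (p : SignedPerm n) {j : ℕ} (h1 : 1 ≤ j) (h2 : j ≤ n) :
    1 ≤ (word p j).natAbs := by
  rw [word_natAbs p h1 h2]; omega

lemma word_F_cases {n : ℕ} (p : SignedPerm n) {j : ℕ} (h1 : 1 ≤ j) (h2 : j ≤ n) (hj : j ≠ 1) :
    word (F p) j = word p j ∨ (word (F p) j = -word p j ∧ (word p j).natAbs = 1) := by
  have wa := word_natAbs p h1 h2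
  rw [word_F p h1 h2]
  split_ifs with c
  · right
    refine ⟨rfl, ?_⟩
    rcases c with c | c
    · exact absurd c hj
    · omega
  · left; rfl

/-- descents at positions `≥ 2` are unchanged by `F`. -/
lemma mem_ddes_F_high {n : ℕ} (p : SignedPerm n) {i : ℕ} (hi : 2 ≤ i) :
    i ∈ ddes (F p) ↔ i ∈ ddes p := by
  rw [mem_ddes, mem_ddes]
  by_cases hin : i < n
  swap
  · simp [hin]
  have h1 : 1 ≤ i := by omega
  have h2 : i ≤ n := by omega
  have h3 : 1 ≤ i + 1 := by omega
  have h4 : i + 1 ≤ n := by omega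
  have e1 : entry (F p) i = word (F p) i := by rw [entry, if_neg (by omega)]
  have e2 : entry (F p) (i+1) = word (F p) (i+1) := by rw [entry, if_neg (by omega)]
  have e3 : entry p i = word p i := by rw [entry, if_neg (by omega)]
  have e4 : entry p (i+1) = word p (i+1) := by rw [entry, if_neg (by omega)]
  rw [e1, e2, e3, e4]
  have ha : 1 ≤ (word p i).natAbs := word_natAbs_pos p h1 h2
  have hb : 1 ≤ (word p (i+1)).natAbs := word_natAbs_pos p h3 h4
  have hne : (word p i).natAbs ≠ (word p (i+1)).natAbs := natAbs_ne p h1 h2 h3 h4 (by omega)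
  rcases word_F_cases p h1 h2 (by omega) with fa | ⟨fa, fa1⟩ <;>
    rcases word_F_cases p h3 h4 (by omega) with fb | ⟨fb, fb1⟩ <;>
    rw [fa, fb] <;> omega

lemma parity_iff {n : ℕ} (s : Fin n → Bool) :
    Even (Finset.univ.filter (fun i => s i = true)).card ↔
      ∑ i : Fin n, (if s i then (1 : ZMod 2) else 0) = 0 := by
  rw [Finset.sum_boole, ZMod.natCast_eq_zero_iff, Nat.even_iff]
  omega

lemma inD_F {n : ℕ} (p : SignedPerm n) (hn : 1 ≤ n) (h0 : (p.1 ⟨0, by omega⟩ : ℕ) ≠ 0) :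
    inD (F p) ↔ inD p := by
  rw [inD, inD, parity_iff, parity_iff]
  have hsum : ∑ i : Fin n, (if (F p).2 i then (1 : ZMod 2) else 0)
      = ∑ i : Fin n, ((if p.2 i then (1 : ZMod 2) else 0)
          + (if (i : ℕ) = 0 ∨ (p.1 i : ℕ) = 0 then 1 else 0)) := by
    apply Finset.sum_congr rfl
    intro i _
    simp only [F]
    by_cases hc : (i : ℕ) = 0 ∨ (p.1 i : ℕ) = 0 <;>
      rcases Bool.eq_false_or_eq_true (p.2 i) with hb | hb <;> simp [hb, hc] <;> decide
  rw [hsum, Finset.sum_add_distrib]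
  have h2 : ∑ i : Fin n, (if (i : ℕ) = 0 ∨ (p.1 i : ℕ) = 0 then (1 : ZMod 2) else 0) = 0 := by
    rw [Finset.sum_boole]
    have : Finset.univ.filter (fun i : Fin n => (i : ℕ) = 0 ∨ (p.1 i : ℕ) = 0)
        = {⟨0, by omega⟩, p.1.symm ⟨0, by omega⟩} := by
      ext i
      simp only [Finset.mem_filter, Finset.mem_univ, true_and, Finset.mem_insert,
        Finset.mem_singleton]
      constructor
      · rintro (h | h)
        · left; exact Fin.ext h
        · right
          rw [Equiv.eq_symm_apply]
          exact Fin.ext h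
      · rintro (h | h)
        · left; rw [h]
        · right; rw [h, Equiv.apply_symm_apply]
    have hne0 : (⟨0, by omega⟩ : Fin n) ≠ p.1.symm ⟨0, by omega⟩ := by
      intro h
      apply h0
      have : p.1 ⟨0, by omega⟩ = ⟨0, by omega⟩ := by
        conv_lhs => rw [h]
        rw [Equiv.apply_symm_apply]
      rw [this]
    rw [this, Finset.card_pair hne0]
    exact ZMod.natCast_self 2
  rw [h2, add_zero]

lemma type_iff {n : ℕ} (p : SignedPerm n) (hn : 2 ≤ n)
    (hAB : (word p 2).natAbs < (word p 1).natAbs) :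
    (type1 p ↔ 0 < word p 1) ∧ (type0Ge2 p ↔ word p 1 < 0) := by
  have h2 : 1 ≤ (word p 2).natAbs := word_natAbs_pos p (by omega) hn
  simp only [type1, type0Ge2, mem0 p hn, mem1 p hn]
  omega

lemma natAbs_lt_of_type1 {n : ℕ} (p : SignedPerm n) (hn : 2 ≤ n) (h : type1 p) :
    (word p 2).natAbs < (word p 1).natAbs := by
  have hne := natAbs_ne p le_rfl (by omega) (by omega) hn (by omega)
  have h1 := word_natAbs_pos p le_rfl (by omega)
  have h2 := word_natAbs_pos p (by omega) hn
  obtain ⟨ha, hb⟩ := h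
  rw [mem1 p hn] at ha
  rw [mem0 p hn] at hb
  omega

lemma natAbs_lt_of_type0Ge2 {n : ℕ} (p : SignedPerm n) (hn : 2 ≤ n) (h : type0Ge2 p) :
    (word p 2).natAbs < (word p 1).natAbs := by
  have hne := natAbs_ne p le_rfl (by omega) (by omega) hn (by omega)
  have h1 := word_natAbs_pos p le_rfl (by omega)
  have h2 := word_natAbs_pos p (by omega) hn
  obtain ⟨ha, hb⟩ := h
  rw [mem0 p hn] at ha
  rw [mem1 p hn] at hb
  omega

lemma d_F {n : ℕ} (p : SignedPerm n) (hn : 2 ≤ n)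
    (hAB : (word p 2).natAbs < (word p 1).natAbs) : d (F p) = d p := by
  have key : ∀ q : SignedPerm n, d q = ∑ i ∈ Finset.range n, if i ∈ ddes q then 1 else 0 := by
    intro q
    rw [d, ddes, Finset.card_filter]
    exact Finset.sum_congr rfl fun i hi => by simp [ddes, Finset.mem_filter, hi]
  have split : ∀ g : ℕ → ℕ,
      ∑ i ∈ Finset.range n, g i = g 0 + g 1 + ∑ i ∈ Finset.Ico 2 n, g i := by
    intro g
    rw [Finset.range_eq_Ico, ← Finset.sum_Ico_consecutive g (Nat.zero_le 2) hn]
    have h02 : Finset.Ico 0 2 = Finset.range 2 := by rw [Finset.range_eq_Ico]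
    rw [h02, Finset.sum_range_succ, Finset.sum_range_one]
  rw [key, key, split, split]
  have h1 : 1 ≤ (word p 1).natAbs := word_natAbs_pos p le_rfl (by omega)
  have h2 : 1 ≤ (word p 2).natAbs := word_natAbs_pos p (by omega) hn
  have hw1 : word (F p) 1 = -word p 1 := word_F_one p (by omega)
  have habs2 : (word (F p) 2).natAbs = (word p 2).natAbs := word_F_natAbs p (by omega) hn
  have c2 : (∑ i ∈ Finset.Ico 2 n, if i ∈ ddes (F p) then 1 else 0)
      = ∑ i ∈ Finset.Ico 2 n, if i ∈ ddes p then 1 else 0 :=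
    Finset.sum_congr rfl fun i hi =>
      if_congr (mem_ddes_F_high p (Finset.mem_Ico.mp hi).1) rfl rfl
  have e0p : (0 ∈ ddes p) ↔ word p 1 < 0 := by rw [mem0 p hn]; omega
  have e1p : (1 ∈ ddes p) ↔ 0 < word p 1 := by rw [mem1 p hn]; omega
  have e0q : (0 ∈ ddes (F p)) ↔ 0 < word p 1 := by rw [mem0 (F p) hn, hw1]; omega
  have e1q : (1 ∈ ddes (F p)) ↔ word p 1 < 0 := by rw [mem1 (F p) hn, hw1]; omega
  have hA : word p 1 ≠ 0 := by omega
  rcases hA.lt_or_gt with hs | hs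
  · have x0p : 0 ∈ ddes p := e0p.mpr hs
    have x1p : 1 ∉ ddes p := by rw [e1p]; omega
    have x0q : 0 ∉ ddes (F p) := by rw [e0q]; omega
    have x1q : 1 ∈ ddes (F p) := e1q.mpr hs
    rw [if_pos x0p, if_neg x1p, if_neg x0q, if_pos x1q, c2]
  · have x0p : 0 ∉ ddes p := by rw [e0p]; omega
    have x1p : 1 ∈ ddes p := e1p.mpr hs
    have x0q : 0 ∈ ddes (F p) := e0q.mpr hs
    have x1q : 1 ∉ ddes (F p) := by rw [e1q]; omega
    rw [if_neg x0p, if_pos x1p, if_pos x0q, if_neg x1q, c2]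

lemma main_step1 {n : ℕ} (p : SignedPerm n) (hn : 2 ≤ n) (hD : inD p) (ht : type1 p) :
    inD (F p) ∧ type0Ge2 (F p) ∧ d (F p) = d p := by
  have hAB := natAbs_lt_of_type1 p hn ht
  have hABq : (word (F p) 2).natAbs < (word (F p) 1).natAbs := by
    rw [word_F_natAbs p (by omega) hn, word_F_natAbs p le_rfl (by omega)]
    exact hAB
  have w1 : (word p 1).natAbs = (p.1 ⟨0, by omega⟩ : ℕ) + 1 := word_natAbs p le_rfl (by omega)
  have h2 : 1 ≤ (word p 2).natAbs := word_natAbs_pos p (by omega) hn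
  refine ⟨?_, ?_, d_F p hn hAB⟩
  · rw [inD_F p (by omega) (by omega)]
    exact hD
  · rw [(type_iff (F p) hn hABq).2, word_F_one p (by omega)]
    have := ((type_iff p hn hAB).1).mp ht
    omega

lemma main_step2 {n : ℕ} (p : SignedPerm n) (hn : 2 ≤ n) (hD : inD p) (ht : type0Ge2 p) :
    inD (F p) ∧ type1 (F p) ∧ d (F p) = d p := by
  have hAB := natAbs_lt_of_type0Ge2 p hn ht
  have hABq : (word (F p) 2).natAbs < (word (F p) 1).natAbs := by
    rw [word_F_natAbs p (by omega) hn, word_F_natAbs p le_rfl (by omega)]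
    exact hAB
  have w1 : (word p 1).natAbs = (p.1 ⟨0, by omega⟩ : ℕ) + 1 := word_natAbs p le_rfl (by omega)
  have h2 : 1 ≤ (word p 2).natAbs := word_natAbs_pos p (by omega) hn
  refine ⟨?_, ?_, d_F p hn hAB⟩
  · rw [inD_F p (by omega) (by omega)]
    exact hD
  · rw [(type_iff (F p) hn hABq).1, word_F_one p (by omega)]
    have := ((type_iff p hn hAB).2).mp ht
    omega

end SignedPerm

/-- **Corollary 4.3 (i).** `D_{n,k}^1 = D_{n,k}^{0,≥2}` for all `k`, i.e.
`D_n^1(t) = D_n^{0,≥2}(t)`. -/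
theorem subEuler1_eq_subEuler0Ge2 (n : ℕ) (hn : 2 ≤ n) :
    (∀ k : ℕ, subEuler1 n k = subEuler0Ge2 n k) ∧ polyD1 n = polyD0Ge2 n := by
  constructor
  · intro k
    rw [subEuler1, subEuler0Ge2]
    refine Finset.card_nbij' SignedPerm.F SignedPerm.F ?_ ?_ ?_ ?_
    · intro p hp
      simp only [Finset.coe_filter, Set.mem_setOf_eq, Finset.mem_coe, Finset.mem_filter, Finset.mem_univ, true_and] at hp ⊢
      obtain ⟨hD, ht, hk⟩ := hp
      obtain ⟨a, b, c⟩ := SignedPerm.main_step1 p hn hD ht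
      exact ⟨a, b, by rw [c]; exact hk⟩
    · intro p hp
      simp only [Finset.coe_filter, Set.mem_setOf_eq, Finset.mem_coe, Finset.mem_filter, Finset.mem_univ, true_and] at hp ⊢
      obtain ⟨hD, ht, hk⟩ := hp
      obtain ⟨a, b, c⟩ := SignedPerm.main_step2 p hn hD ht
      exact ⟨a, b, by rw [c]; exact hk⟩
    · intro p _
      exact SignedPerm.F_F p
    · intro p _
      exact SignedPerm.F_F p
  · rw [polyD1, polyD0Ge2]
    refine Finset.sum_nbij' SignedPerm.F SignedPerm.F ?_ ?_ ?_ ?_ ?_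
    · intro p hp
      simp only [Finset.mem_filter, Finset.mem_univ, true_and] at hp ⊢
      obtain ⟨hD, ht⟩ := hp
      obtain ⟨a, b, _⟩ := SignedPerm.main_step1 p hn hD ht
      exact ⟨a, b⟩
    · intro p hp
      simp only [Finset.mem_filter, Finset.mem_univ, true_and] at hp ⊢
      obtain ⟨hD, ht⟩ := hp
      obtain ⟨a, b, _⟩ := SignedPerm.main_step2 p hn hD ht
      exact ⟨a, b⟩
    · intro p _
      exact SignedPerm.F_F p
    · intro p _
      exact SignedPerm.F_F p
    · intro p hp
      simp only [Finset.mem_filter, Finset.mem_univ, true_and] at hp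
      rw [(SignedPerm.main_step1 p hn hp.1 hp.2).2.2]
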